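/- Let θ : [0,T] → ℝ^m solve θ'(t) = F(θ(t), t), and let the sequence θ₀, θ₁, … be generated by the coordinate-sequential (Gauss–Seidel-style) Euler update θ_{i+1,j} = θ_{i,j} + Δ·F_j(θ_i^{(j)}, iΔ) for j = 1,…,m, where θ_i^{(j)} = (θ_{i+1,1},…,θ_{i+1,j−1}, θ_{i,j},…,θ_{i,m}) and θ₀ = θ(0). Assume there exist sets 𝒜(t) ⊂ ℝ^m with inf{‖θ(t) − θ‖ : t ∈ [0,T], θ ∉ 𝒜(t)} > 0, and constants K₁, K₂, K₃ such that for all t ∈ [0,T], θ, θ̃ ∈ 𝒜(t), j: |F_j(θ,t) − F_j(θ̃,t)| ≤ K₁‖θ − θ̃‖, |∂F_j/∂t(θ,t)| ≤ K₂, and ‖F(θ,t)‖ ≤ K₃. Then max_{0 ≤ i ≤ ⌊T/Δ⌋} ‖θ(iΔ) − θ_i‖ → 0 as Δ → 0. -/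

import Mathlib

open Set

/-- The Euclidean norm of a vector in `Fin m → ℝ`. -/
noncomputable def eNorm {m : ℕ} (v : Fin m → ℝ) : ℝ := Real.sqrt (∑ j, (v j) ^ 2)

lemma eNorm_nonneg {m : ℕ} (v : Fin m → ℝ) : 0 ≤ eNorm v := Real.sqrt_nonneg _

lemma coord_le_eNorm {m : ℕ} (v : Fin m → ℝ) (j : Fin m) : |v j| ≤ eNorm v := by
  rw [eNorm, ← Real.sqrt_sq_eq_abs]
  exact Real.sqrt_le_sqrt (Finset.single_le_sum (fun i _ => sq_nonneg (v i)) (Finset.mem_univ j))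

lemma eNorm_le_of_coords {m : ℕ} (v : Fin m → ℝ) (B : ℝ) (hB : 0 ≤ B) (h : ∀ j, |v j| ≤ B) :
    eNorm v ≤ Real.sqrt m * B := by
  rw [eNorm, ← Real.sqrt_sq hB, ← Real.sqrt_mul (by positivity)]
  apply Real.sqrt_le_sqrt
  calc ∑ j, (v j)^2 ≤ ∑ _j : Fin m, B^2 := by
        apply Finset.sum_le_sum; intro i _
        rw [← sq_abs]; exact pow_le_pow_left₀ (abs_nonneg _) (h i) 2
    _ = m * B^2 := by simp [Finset.sum_const, Finset.card_univ]

lemma eNorm_mono {m : ℕ} (u v : Fin m → ℝ) (h : ∀ j, |u j| ≤ |v j|) : eNorm u ≤ eNorm v := by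
  apply Real.sqrt_le_sqrt
  apply Finset.sum_le_sum; intro i _
  rw [← sq_abs (u i), ← sq_abs (v i)]
  exact pow_le_pow_left₀ (abs_nonneg _) (h i) 2

lemma eNorm_eq_norm {m : ℕ} (v : Fin m → ℝ) :
    eNorm v = ‖(WithLp.equiv 2 (Fin m → ℝ)).symm v‖ := by
  rw [EuclideanSpace.norm_eq, eNorm]
  congr 1; apply Finset.sum_congr rfl; intro i _
  rw [show ((WithLp.equiv 2 (Fin m → ℝ)).symm v).ofLp i = v i from rfl, Real.norm_eq_abs, sq_abs]

lemma eNorm_add_le {m : ℕ} (u v : Fin m → ℝ) :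
    eNorm (fun j => u j + v j) ≤ eNorm u + eNorm v := by
  rw [eNorm_eq_norm, eNorm_eq_norm, eNorm_eq_norm]
  exact norm_add_le _ _

lemma eNorm_abs {m : ℕ} (v : Fin m → ℝ) : eNorm (fun j => |v j|) = eNorm v := by
  unfold eNorm; congr 1; apply Finset.sum_congr rfl; intro i _; rw [sq_abs]

lemma eNorm_const {m : ℕ} (c : ℝ) (hc : 0 ≤ c) : eNorm (fun _ : Fin m => c) = Real.sqrt m * c := by
  rw [eNorm]
  simp only [Finset.sum_const, Finset.card_univ, Fintype.card_fin, nsmul_eq_mul]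
  rw [Real.sqrt_mul (by positivity), Real.sqrt_sq hc]

lemma eNorm_le_add_const {m : ℕ} (x y : Fin m → ℝ) (c : ℝ) (hc : 0 ≤ c)
    (h : ∀ j, |x j| ≤ |y j| + c) : eNorm x ≤ eNorm y + Real.sqrt m * c := by
  calc eNorm x ≤ eNorm (fun j => |y j| + c) := by
        apply eNorm_mono; intro j
        rw [abs_of_nonneg (add_nonneg (abs_nonneg _) hc)]; exact h j
    _ ≤ eNorm (fun j => |y j|) + eNorm (fun _ : Fin m => c) := eNorm_add_le _ _
    _ = eNorm y + Real.sqrt m * c := by rw [eNorm_abs, eNorm_const c hc]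

lemma mvt_abs {f f' : ℝ → ℝ} {a b C : ℝ} (hab : a ≤ b)
    (hf : ∀ x ∈ Icc a b, HasDerivAt f (f' x) x)
    (bound : ∀ x ∈ Icc a b, |f' x| ≤ C) :
    |f b - f a| ≤ C * (b - a) := by
  have := Convex.norm_image_sub_le_of_norm_hasDerivWithin_le
    (f := f) (f' := f') (s := Icc a b)
    (fun x hx => (hf x hx).hasDerivWithinAt)
    (fun x hx => by rw [Real.norm_eq_abs]; exact bound x hx)
    (convex_Icc a b) (left_mem_Icc.2 hab) (right_mem_Icc.2 hab)
  rwa [Real.norm_eq_abs, Real.norm_eq_abs,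
    show |b - a| = b - a from abs_of_nonneg (by linarith)] at this

lemma mvt_of_exists {f : ℝ → ℝ} {a b C : ℝ} (hab : a ≤ b)
    (h : ∀ x ∈ Icc a b, ∃ d, HasDerivAt f d x ∧ |d| ≤ C) :
    |f b - f a| ≤ C * (b - a) := by
  refine mvt_abs (f := f)
    (f' := fun x => if hx : x ∈ Icc a b then (h x hx).choose else 0) hab ?_ ?_
  · intro x hx
    simpa only [dif_pos hx] using (h x hx).choose_spec.1
  · intro x hx
    simpa only [dif_pos hx] using (h x hx).choose_spec.2


set_option maxHeartbeats 1000000 in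
/-- Lemma 3: the coordinate-sequential (Gauss–Seidel style) Euler method
converges uniformly to the true ODE solution as the step size goes to 0. -/
theorem modified_euler_converges (m : ℕ) (hm : 0 < m) (T : ℝ) (hT : 0 < T)
    (F : (Fin m → ℝ) → ℝ → (Fin m → ℝ)) (θ : ℝ → (Fin m → ℝ))
    (𝒜 : ℝ → Set (Fin m → ℝ))
    -- the true solution solves the ODE, coordinatewise
    (hODE : ∀ t ∈ Icc (0 : ℝ) T, ∀ j : Fin m,
      HasDerivAt (fun s => θ s j) (F (θ t) t j) t)
    -- positive separation between the trajectory and the complements of the sets 𝒜(t)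
    (hsep : ∃ η > 0, ∀ t ∈ Icc (0 : ℝ) T, ∀ v : Fin m → ℝ, v ∉ 𝒜 t →
      η ≤ eNorm (fun j => θ t j - v j))
    (K₁ K₂ K₃ : ℝ)
    -- coordinatewise Lipschitz bound on 𝒜(t)
    (hK₁ : ∀ t ∈ Icc (0 : ℝ) T, ∀ u ∈ 𝒜 t, ∀ v ∈ 𝒜 t, ∀ j : Fin m,
      |F u t j - F v t j| ≤ K₁ * eNorm (fun l => u l - v l))
    -- bounded time-derivative of each coordinate of F on 𝒜(t)
    (hK₂ : ∀ t ∈ Icc (0 : ℝ) T, ∀ v ∈ 𝒜 t, ∀ j : Fin m,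
      ∃ d : ℝ, HasDerivAt (fun s => F v s j) d t ∧ |d| ≤ K₂)
    -- norm bound on F over 𝒜(t)
    (hK₃ : ∀ t ∈ Icc (0 : ℝ) T, ∀ v ∈ 𝒜 t, eNorm (F v t) ≤ K₃) :
    ∀ ε > 0, ∃ δ > 0, ∀ Δ : ℝ, 0 < Δ → Δ < δ →
      ∀ seq : ℕ → (Fin m → ℝ),
        seq 0 = θ 0 →
        -- coordinate-sequential Euler update: each coordinate uses the freshly
        -- updated lower coordinates
        (∀ i : ℕ, ∀ j : Fin m,
          seq (i + 1) j = seq i j +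
            Δ * F (fun l => if (l : ℕ) < (j : ℕ) then seq (i + 1) l else seq i l)
              (i * Δ) j) →
        ∀ i : ℕ, i ≤ Nat.floor (T / Δ) →
          eNorm (fun j => θ (i * Δ) j - seq i j) ≤ ε := by
  obtain ⟨η, hη, hsep'⟩ := hsep
  have h0T : (0:ℝ) ∈ Icc (0:ℝ) T := ⟨le_refl 0, hT.le⟩
  have hmemθ : ∀ t ∈ Icc (0:ℝ) T, θ t ∈ 𝒜 t := by
    intro t ht
    by_contra h
    have h1 := hsep' t ht (θ t) h
    have h2 : eNorm (fun j => θ t j - θ t j) = 0 := by simp [eNorm]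
    linarith
  have hmem_of_close : ∀ t ∈ Icc (0:ℝ) T, ∀ v : Fin m → ℝ,
      eNorm (fun j => θ t j - v j) < η → v ∈ 𝒜 t := by
    intro t ht v hv
    by_contra h
    exact absurd (hsep' t ht v h) (not_le.2 hv)
  have hK₃0 : 0 ≤ K₃ := le_trans (eNorm_nonneg _) (hK₃ 0 h0T (θ 0) (hmemθ 0 h0T))
  have hK₂0 : 0 ≤ K₂ := by
    obtain ⟨d, _, hd⟩ := hK₂ 0 h0T (θ 0) (hmemθ 0 h0T) ⟨0, hm⟩
    exact le_trans (abs_nonneg d) hd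
  obtain ⟨L, hL0, hLip⟩ : ∃ L : ℝ, 0 ≤ L ∧ ∀ t ∈ Icc (0:ℝ) T, ∀ u ∈ 𝒜 t, ∀ v ∈ 𝒜 t,
      ∀ j : Fin m, |F u t j - F v t j| ≤ L * eNorm (fun l => u l - v l) :=
    ⟨max K₁ 0, le_max_right _ _, fun t ht u hu v hv j =>
      (hK₁ t ht u hu v hv j).trans
        (mul_le_mul_of_nonneg_right (le_max_left _ _) (eNorm_nonneg _))⟩
  have hsm0 : (0:ℝ) ≤ Real.sqrt m := Real.sqrt_nonneg m
  have hF3 : ∀ t ∈ Icc (0:ℝ) T, ∀ v ∈ 𝒜 t, ∀ j : Fin m, |F v t j| ≤ K₃ :=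
    fun t ht v hv j => (coord_le_eNorm (F v t) j).trans (hK₃ t ht v hv)
  have hθLip : ∀ a ∈ Icc (0:ℝ) T, ∀ b ∈ Icc (0:ℝ) T, a ≤ b → ∀ j : Fin m,
      |θ b j - θ a j| ≤ K₃ * (b - a) := by
    intro a ha b hb hab j
    have hsub : Icc a b ⊆ Icc (0:ℝ) T := Icc_subset_Icc ha.1 hb.2
    exact mvt_abs hab (fun x hx => hODE x (hsub hx) j)
      (fun x hx => hF3 x (hsub hx) (θ x) (hmemθ x (hsub hx)) j)
  have hθLipE : ∀ a ∈ Icc (0:ℝ) T, ∀ b ∈ Icc (0:ℝ) T, a ≤ b →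
      eNorm (fun j => θ b j - θ a j) ≤ Real.sqrt m * (K₃ * (b - a)) := by
    intro a ha b hb hab
    exact eNorm_le_of_coords _ _ (mul_nonneg hK₃0 (by linarith)) (hθLip a ha b hb hab)
  intro ε hε
  set C₁ : ℝ := L * (Real.sqrt m * K₃) + K₂ with hC₁def
  have hC₁0 : 0 ≤ C₁ := add_nonneg (mul_nonneg hL0 (mul_nonneg hsm0 hK₃0)) hK₂0
  set a : ℝ := Real.sqrt m * L with hadef
  have ha0 : 0 ≤ a := mul_nonneg hsm0 hL0
  set C₂ : ℝ := Real.sqrt m * (L * (Real.sqrt m * K₃) + C₁) with hC₂def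
  have hC₂0 : 0 ≤ C₂ :=
    mul_nonneg hsm0 (add_nonneg (mul_nonneg hL0 (mul_nonneg hsm0 hK₃0)) hC₁0)
  set M : ℝ := C₂ * T * Real.exp (a * T) with hMdef
  have hM0 : 0 ≤ M := mul_nonneg (mul_nonneg hC₂0 hT.le) (Real.exp_nonneg _)
  have hsk : 0 ≤ Real.sqrt m * K₃ := mul_nonneg hsm0 hK₃0
  refine ⟨min (ε / (M + 1)) (η / (M + Real.sqrt m * K₃ + 1)), ?_, ?_⟩
  · apply lt_min
    · apply div_pos hε; linarith
    · apply div_pos hη; linarith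
  intro Δ hΔ hΔδ seq hseq0 hrec
  have hMε : M * Δ ≤ ε := by
    have h1 : Δ < ε / (M + 1) := lt_of_lt_of_le hΔδ (min_le_left _ _)
    rw [lt_div_iff₀ (by linarith)] at h1
    nlinarith
  have hMη : M * Δ + Real.sqrt m * (K₃ * Δ) < η := by
    have h1 : Δ < η / (M + Real.sqrt m * K₃ + 1) := lt_of_lt_of_le hΔδ (min_le_right _ _)
    rw [lt_div_iff₀ (by linarith)] at h1
    nlinarith
  have hMΔ0 : 0 ≤ M * Δ := mul_nonneg hM0 hΔ.le
  have hskΔ0 : 0 ≤ Real.sqrt m * (K₃ * Δ) := mul_nonneg hsm0 (mul_nonneg hK₃0 hΔ.le)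
  have hsmKη : Real.sqrt m * (K₃ * Δ) < η := by linarith
  have hiT : ∀ n : ℕ, n ≤ Nat.floor (T / Δ) → (n:ℝ) * Δ ≤ T := by
    intro n hn
    have h1 : (n:ℝ) ≤ T / Δ :=
      le_trans (Nat.cast_le.2 hn) (Nat.floor_le (by positivity))
    calc (n:ℝ) * Δ ≤ (T / Δ) * Δ := mul_le_mul_of_nonneg_right h1 hΔ.le
      _ = T := div_mul_cancel₀ T hΔ.ne'
  have hEM : ∀ n : ℕ, n ≤ Nat.floor (T / Δ) →
      C₂ * Δ^2 * n * (1 + a * Δ)^n ≤ M * Δ := by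
    intro n hn
    have hnΔ : (n:ℝ) * Δ ≤ T := hiT n hn
    have haΔ0 : (0:ℝ) ≤ a * Δ := mul_nonneg ha0 hΔ.le
    have hpow : (1 + a * Δ)^n ≤ Real.exp (a * T) := by
      calc (1 + a * Δ)^n ≤ (Real.exp (a * Δ))^n := by
            apply pow_le_pow_left₀ (by linarith)
            linarith [Real.add_one_le_exp (a * Δ)]
        _ = Real.exp ((n:ℝ) * (a * Δ)) := (Real.exp_nat_mul _ n).symm
        _ ≤ Real.exp (a * T) := by
            apply Real.exp_le_exp.2
            calc (n:ℝ) * (a * Δ) = a * ((n:ℝ) * Δ) := by ring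
              _ ≤ a * T := mul_le_mul_of_nonneg_left hnΔ ha0
    have hn0 : (0:ℝ) ≤ (n:ℝ) := Nat.cast_nonneg n
    calc C₂ * Δ^2 * n * (1 + a * Δ)^n ≤ C₂ * Δ^2 * n * Real.exp (a * T) := by
          apply mul_le_mul_of_nonneg_left hpow
          exact mul_nonneg (mul_nonneg hC₂0 (sq_nonneg Δ)) hn0
      _ = (C₂ * Real.exp (a * T)) * (((n:ℝ) * Δ) * Δ) := by ring
      _ ≤ (C₂ * Real.exp (a * T)) * (T * Δ) := by
          apply mul_le_mul_of_nonneg_left _ (mul_nonneg hC₂0 (Real.exp_nonneg _))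
          exact mul_le_mul_of_nonneg_right hnΔ hΔ.le
      _ = M * Δ := by rw [hMdef]; ring
  have main : ∀ n : ℕ, n ≤ Nat.floor (T / Δ) →
      eNorm (fun j => θ ((n:ℝ) * Δ) j - seq n j) ≤ C₂ * Δ^2 * n * (1 + a * Δ)^n := by
    intro n
    induction n with
    | zero =>
      intro _
      simp [eNorm, hseq0]
    | succ i ih =>
      intro hi1
      have hi : i ≤ Nat.floor (T / Δ) := Nat.le_of_succ_le hi1
      have IH := ih hi
      have hit : (0:ℝ) ≤ (i:ℝ) * Δ := mul_nonneg (Nat.cast_nonneg i) hΔ.le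
      have ht : (i:ℝ) * Δ ∈ Icc (0:ℝ) T := ⟨hit, hiT i hi⟩
      have ht1T : (i:ℝ) * Δ + Δ ≤ T := by
        have h := hiT (i+1) hi1
        push_cast at h
        linarith
      have ht1 : (i:ℝ) * Δ + Δ ∈ Icc (0:ℝ) T := ⟨by linarith, ht1T⟩
      have hEi0 : 0 ≤ eNorm (fun j => θ ((i:ℝ) * Δ) j - seq i j) := eNorm_nonneg _
      have hEi : eNorm (fun j => θ ((i:ℝ) * Δ) j - seq i j) ≤ M * Δ := IH.trans (hEM i hi)
      have hsub : Icc ((i:ℝ)*Δ) ((i:ℝ)*Δ + Δ) ⊆ Icc (0:ℝ) T := Icc_subset_Icc hit ht1T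
      -- mixed vectors stay in 𝒜
      have mixmem : ∀ j : Fin m,
          (∀ k : Fin m, (k:ℕ) < (j:ℕ) → |seq (i+1) k - seq i k| ≤ K₃ * Δ) →
          eNorm (fun k : Fin m => θ ((i:ℝ)*Δ) k -
              (if (k:ℕ) < (j:ℕ) then seq (i+1) k else seq i k)) ≤
            eNorm (fun k => θ ((i:ℝ) * Δ) k - seq i k) + Real.sqrt m * (K₃ * Δ) ∧
          (fun l : Fin m => if (l:ℕ) < (j:ℕ) then seq (i+1) l else seq i l) ∈ 𝒜 ((i:ℝ)*Δ) := by
        intro j hj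
        have hcoord : ∀ k : Fin m,
            |θ ((i:ℝ)*Δ) k - (if ((k:ℕ) : ℕ) < (j:ℕ) then seq (i+1) k else seq i k)| ≤
              |θ ((i:ℝ)*Δ) k - seq i k| + K₃ * Δ := by
          intro k
          by_cases hk : (k:ℕ) < (j:ℕ)
          · rw [if_pos hk]
            have h1 := hj k hk
            have h2 : θ ((i:ℝ)*Δ) k - seq (i+1) k =
                (θ ((i:ℝ)*Δ) k - seq i k) + (seq i k - seq (i+1) k) := by ring
            rw [h2]
            refine (abs_add_le _ _).trans ?_
            rw [abs_sub_comm (seq i k) (seq (i+1) k)]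
            linarith
          · rw [if_neg hk]
            have hKΔ : 0 ≤ K₃ * Δ := mul_nonneg hK₃0 hΔ.le
            linarith
        have h1 := eNorm_le_add_const _ _ (K₃ * Δ) (mul_nonneg hK₃0 hΔ.le) hcoord
        refine ⟨h1, hmem_of_close _ ht _ ?_⟩
        exact lt_of_le_of_lt h1 (by linarith)
      -- increments bounded
      have key : ∀ n : ℕ, ∀ l : Fin m, (l:ℕ) < n → |seq (i+1) l - seq i l| ≤ K₃ * Δ := by
        intro n
        induction n with
        | zero => intro l hl; omega
        | succ n ihn =>
          intro l hl
          rcases Nat.lt_succ_iff_lt_or_eq.mp hl with h | h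
          · exact ihn l h
          · have hmix := mixmem l (fun k hk => ihn k (by omega))
            rw [hrec i l, add_sub_cancel_left, abs_mul, abs_of_pos hΔ, mul_comm K₃ Δ]
            exact mul_le_mul_of_nonneg_left (hF3 _ ht _ hmix.2 l) hΔ.le
      -- θ(iΔ) stays in 𝒜 s for s in the step interval
      have hθmem_t : ∀ s ∈ Icc ((i:ℝ)*Δ) ((i:ℝ)*Δ + Δ), θ ((i:ℝ)*Δ) ∈ 𝒜 s := by
        intro s hs
        apply hmem_of_close s (hsub hs)
        have h1 : eNorm (fun k => θ s k - θ ((i:ℝ)*Δ) k) ≤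
            Real.sqrt m * (K₃ * (s - (i:ℝ)*Δ)) := hθLipE _ ht _ (hsub hs) hs.1
        have h2 : Real.sqrt m * (K₃ * (s - (i:ℝ)*Δ)) ≤ Real.sqrt m * (K₃ * Δ) := by
          apply mul_le_mul_of_nonneg_left _ hsm0
          apply mul_le_mul_of_nonneg_left _ hK₃0
          linarith [hs.2]
        linarith
      -- truncation error
      have htrunc : ∀ j : Fin m,
          |θ ((i:ℝ)*Δ + Δ) j - θ ((i:ℝ)*Δ) j - Δ * F (θ ((i:ℝ)*Δ)) ((i:ℝ)*Δ) j| ≤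
            C₁ * Δ * Δ := by
        intro j
        have hd2 : ∀ s ∈ Icc ((i:ℝ)*Δ) ((i:ℝ)*Δ + Δ),
            |F (θ ((i:ℝ)*Δ)) s j - F (θ ((i:ℝ)*Δ)) ((i:ℝ)*Δ) j| ≤ K₂ * Δ := by
          intro s hs
          have hmvt := mvt_of_exists (f := fun r => F (θ ((i:ℝ)*Δ)) r j) hs.1
            (fun x hx => by
              have hx1 : x ∈ Icc ((i:ℝ)*Δ) ((i:ℝ)*Δ + Δ) := ⟨hx.1, hx.2.trans hs.2⟩
              exact hK₂ x (hsub hx1) _ (hθmem_t x hx1) j)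
          calc |F (θ ((i:ℝ)*Δ)) s j - F (θ ((i:ℝ)*Δ)) ((i:ℝ)*Δ) j|
              ≤ K₂ * (s - (i:ℝ)*Δ) := hmvt
            _ ≤ K₂ * Δ := mul_le_mul_of_nonneg_left (by linarith [hs.2]) hK₂0
        have hbound : ∀ x ∈ Icc ((i:ℝ)*Δ) ((i:ℝ)*Δ + Δ),
            |F (θ x) x j - F (θ ((i:ℝ)*Δ)) ((i:ℝ)*Δ) j| ≤ C₁ * Δ := by
          intro x hx
          have hx0 : x ∈ Icc (0:ℝ) T := hsub hx
          have h1 : |F (θ x) x j - F (θ ((i:ℝ)*Δ)) x j| ≤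
              L * (Real.sqrt m * (K₃ * Δ)) := by
            refine (hLip x hx0 (θ x) (hmemθ x hx0) (θ ((i:ℝ)*Δ)) (hθmem_t x hx) j).trans ?_
            apply mul_le_mul_of_nonneg_left _ hL0
            refine (hθLipE _ ht _ hx0 hx.1).trans ?_
            apply mul_le_mul_of_nonneg_left _ hsm0
            apply mul_le_mul_of_nonneg_left _ hK₃0
            linarith [hx.2]
          have h2 := hd2 x hx
          have h3 : F (θ x) x j - F (θ ((i:ℝ)*Δ)) ((i:ℝ)*Δ) j =
              (F (θ x) x j - F (θ ((i:ℝ)*Δ)) x j) +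
              (F (θ ((i:ℝ)*Δ)) x j - F (θ ((i:ℝ)*Δ)) ((i:ℝ)*Δ) j) := by ring
          calc |F (θ x) x j - F (θ ((i:ℝ)*Δ)) ((i:ℝ)*Δ) j|
              ≤ |F (θ x) x j - F (θ ((i:ℝ)*Δ)) x j| +
                |F (θ ((i:ℝ)*Δ)) x j - F (θ ((i:ℝ)*Δ)) ((i:ℝ)*Δ) j| := by
                rw [h3]; exact abs_add_le _ _
            _ ≤ L * (Real.sqrt m * (K₃ * Δ)) + K₂ * Δ := add_le_add h1 h2
            _ = C₁ * Δ := by rw [hC₁def]; ring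
        have hg := mvt_abs (a := (i:ℝ)*Δ) (b := (i:ℝ)*Δ + Δ)
          (f := fun s => θ s j - s * F (θ ((i:ℝ)*Δ)) ((i:ℝ)*Δ) j)
          (f' := fun s => F (θ s) s j - F (θ ((i:ℝ)*Δ)) ((i:ℝ)*Δ) j)
          (by linarith)
          (fun x hx => (hODE x (hsub hx) j).sub (hasDerivAt_mul_const _))
          hbound
        have hg' : |θ ((i:ℝ)*Δ + Δ) j - ((i:ℝ)*Δ + Δ) * F (θ ((i:ℝ)*Δ)) ((i:ℝ)*Δ) j -
            (θ ((i:ℝ)*Δ) j - ((i:ℝ)*Δ) * F (θ ((i:ℝ)*Δ)) ((i:ℝ)*Δ) j)| ≤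
            C₁ * Δ * (((i:ℝ)*Δ + Δ) - (i:ℝ)*Δ) := hg
        have e1 : θ ((i:ℝ)*Δ + Δ) j - ((i:ℝ)*Δ + Δ) * F (θ ((i:ℝ)*Δ)) ((i:ℝ)*Δ) j -
            (θ ((i:ℝ)*Δ) j - ((i:ℝ)*Δ) * F (θ ((i:ℝ)*Δ)) ((i:ℝ)*Δ) j) =
            θ ((i:ℝ)*Δ + Δ) j - θ ((i:ℝ)*Δ) j - Δ * F (θ ((i:ℝ)*Δ)) ((i:ℝ)*Δ) j := by ring
        have e2 : C₁ * Δ * (((i:ℝ)*Δ + Δ) - (i:ℝ)*Δ) = C₁ * Δ * Δ := by ring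
        rw [e1, e2] at hg'
        exact hg'
      -- per-coordinate one-step estimate
      have hstep : ∀ j : Fin m,
          |θ ((i:ℝ)*Δ + Δ) j - seq (i+1) j| ≤
            |θ ((i:ℝ)*Δ) j - seq i j| +
            (Δ * (L * (eNorm (fun k => θ ((i:ℝ)*Δ) k - seq i k) +
              Real.sqrt m * (K₃ * Δ))) + C₁ * Δ * Δ) := by
        intro j
        have hmix := mixmem j (fun k _ => key m k k.isLt)
        have hLj : |F (θ ((i:ℝ)*Δ)) ((i:ℝ)*Δ) j -
            F (fun l => if (l:ℕ) < (j:ℕ) then seq (i+1) l else seq i l) ((i:ℝ)*Δ) j| ≤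
            L * (eNorm (fun k => θ ((i:ℝ)*Δ) k - seq i k) + Real.sqrt m * (K₃ * Δ)) := by
          refine (hLip _ ht _ (hmemθ _ ht) _ hmix.2 j).trans ?_
          exact mul_le_mul_of_nonneg_left hmix.1 hL0
        have h2 : |Δ * (F (θ ((i:ℝ)*Δ)) ((i:ℝ)*Δ) j -
            F (fun l => if (l:ℕ) < (j:ℕ) then seq (i+1) l else seq i l) ((i:ℝ)*Δ) j)| ≤
            Δ * (L * (eNorm (fun k => θ ((i:ℝ)*Δ) k - seq i k) +
              Real.sqrt m * (K₃ * Δ))) := by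
          rw [abs_mul, abs_of_pos hΔ]
          exact mul_le_mul_of_nonneg_left hLj hΔ.le
        have hdecomp : θ ((i:ℝ)*Δ + Δ) j - seq (i+1) j =
            (θ ((i:ℝ)*Δ + Δ) j - θ ((i:ℝ)*Δ) j - Δ * F (θ ((i:ℝ)*Δ)) ((i:ℝ)*Δ) j) +
            (θ ((i:ℝ)*Δ) j - seq i j) +
            Δ * (F (θ ((i:ℝ)*Δ)) ((i:ℝ)*Δ) j -
              F (fun l => if (l:ℕ) < (j:ℕ) then seq (i+1) l else seq i l) ((i:ℝ)*Δ) j) := by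
          rw [hrec i j]; ring
        have h1 := htrunc j
        calc |θ ((i:ℝ)*Δ + Δ) j - seq (i+1) j|
            = |(θ ((i:ℝ)*Δ + Δ) j - θ ((i:ℝ)*Δ) j - Δ * F (θ ((i:ℝ)*Δ)) ((i:ℝ)*Δ) j) +
              (θ ((i:ℝ)*Δ) j - seq i j) +
              Δ * (F (θ ((i:ℝ)*Δ)) ((i:ℝ)*Δ) j -
                F (fun l => if (l:ℕ) < (j:ℕ) then seq (i+1) l else seq i l) ((i:ℝ)*Δ) j)| := by
              rw [hdecomp]
          _ ≤ |(θ ((i:ℝ)*Δ + Δ) j - θ ((i:ℝ)*Δ) j - Δ * F (θ ((i:ℝ)*Δ)) ((i:ℝ)*Δ) j) +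
              (θ ((i:ℝ)*Δ) j - seq i j)| +
              |Δ * (F (θ ((i:ℝ)*Δ)) ((i:ℝ)*Δ) j -
                F (fun l => if (l:ℕ) < (j:ℕ) then seq (i+1) l else seq i l) ((i:ℝ)*Δ) j)| :=
              abs_add_le _ _
          _ ≤ (|θ ((i:ℝ)*Δ + Δ) j - θ ((i:ℝ)*Δ) j - Δ * F (θ ((i:ℝ)*Δ)) ((i:ℝ)*Δ) j| +
              |θ ((i:ℝ)*Δ) j - seq i j|) +
              |Δ * (F (θ ((i:ℝ)*Δ)) ((i:ℝ)*Δ) j -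
                F (fun l => if (l:ℕ) < (j:ℕ) then seq (i+1) l else seq i l) ((i:ℝ)*Δ) j)| :=
              add_le_add_left (abs_add_le _ _) _
          _ ≤ _ := by linarith
      -- assemble with eNorm
      have harg : ((i+1 : ℕ) : ℝ) * Δ = (i:ℝ) * Δ + Δ := by push_cast; ring
      have hc0 : 0 ≤ Δ * (L * (eNorm (fun k => θ ((i:ℝ)*Δ) k - seq i k) +
          Real.sqrt m * (K₃ * Δ))) + C₁ * Δ * Δ :=
        add_nonneg (mul_nonneg hΔ.le (mul_nonneg hL0 (add_nonneg hEi0 hskΔ0)))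
          (mul_nonneg (mul_nonneg hC₁0 hΔ.le) hΔ.le)
      have hE1 : eNorm (fun j => θ ((i:ℝ)*Δ + Δ) j - seq (i+1) j) ≤
          eNorm (fun j => θ ((i:ℝ)*Δ) j - seq i j) +
          Real.sqrt m * (Δ * (L * (eNorm (fun k => θ ((i:ℝ)*Δ) k - seq i k) +
            Real.sqrt m * (K₃ * Δ))) + C₁ * Δ * Δ) :=
        eNorm_le_add_const _ _ _ hc0 hstep
      have hiden : eNorm (fun j => θ ((i:ℝ)*Δ) j - seq i j) +
          Real.sqrt m * (Δ * (L * (eNorm (fun k => θ ((i:ℝ)*Δ) k - seq i k) +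
            Real.sqrt m * (K₃ * Δ))) + C₁ * Δ * Δ) =
          (1 + a * Δ) * eNorm (fun j => θ ((i:ℝ)*Δ) j - seq i j) + C₂ * Δ^2 := by
        rw [hadef, hC₂def]; ring
      have haΔ0 : (0:ℝ) ≤ a * Δ := mul_nonneg ha0 hΔ.le
      have hp1 : (1:ℝ) ≤ (1 + a * Δ)^(i+1) :=
        one_le_pow₀ (by linarith)
      have hC2Δ : 0 ≤ C₂ * Δ^2 := mul_nonneg hC₂0 (sq_nonneg Δ)
      have h5 : (1 + a * Δ) * eNorm (fun j => θ ((i:ℝ)*Δ) j - seq i j) ≤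
          C₂ * Δ^2 * i * (1 + a * Δ)^(i+1) := by
        have := mul_le_mul_of_nonneg_left IH (by linarith : (0:ℝ) ≤ 1 + a * Δ)
        calc (1 + a * Δ) * eNorm (fun j => θ ((i:ℝ)*Δ) j - seq i j)
            ≤ (1 + a * Δ) * (C₂ * Δ^2 * i * (1 + a * Δ)^i) := this
          _ = C₂ * Δ^2 * i * (1 + a * Δ)^(i+1) := by ring
      rw [show (((i+1 : ℕ)) : ℝ) * Δ = (i:ℝ) * Δ + Δ from harg]
      push_cast
      calc eNorm (fun j => θ ((i:ℝ)*Δ + Δ) j - seq (i+1) j)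
          ≤ (1 + a * Δ) * eNorm (fun j => θ ((i:ℝ)*Δ) j - seq i j) + C₂ * Δ^2 := by
            rw [← hiden]; exact hE1
        _ ≤ C₂ * Δ^2 * ((i:ℝ)+1) * (1 + a * Δ)^(i+1) := by
            have h7 : 0 ≤ C₂ * Δ^2 * ((1 + a * Δ)^(i+1) - 1) :=
              mul_nonneg hC2Δ (by linarith)
            nlinarith [h5, hC2Δ]
      done
  intro i hi
  exact (main i hi).trans ((hEM i hi).trans hMε)
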